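/- arXiv:2108.05184 — 4 statements merged into one kernel-verified Lean document; each statement's English description precedes it below -/
import Mathlib

section
/- Suppose Assumption 2 holds and fix δ ∈ (0, 1]. For any θ, θ̇ ∈ Θ with ‖θ − θ̇‖₂ ≤ δ, the forecast and dominating recursions started at the same initial values f_{θ,0} = f_{θ̇,0} = f and d_{θ̇,0} = d ∈ [1, ∞) satisfy |f_{θ,t} − f_{θ̇,t}| ≤ δ d_{θ̇,t} for all t ≥ 0. -/
/-- **The dominating process bounds the forecast discrepancy.** Under Assumption 2, for
`δ ∈ (0,1]` and prediction rules `θ, θ̇ ∈ Θ` with `‖θ - θ̇‖₂ ≤ δ`, the recursive threshold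
forecasts started at the same initial value satisfy `|f_{θ,t} - f_{θ̇,t}| ≤ δ d_{θ̇,t}` for
all `t ≥ 0`, where `d_{θ̇,t}` is the dominating process. -/
theorem forecast_dominated {K : ℕ} (Y : ℕ → ℝ) (regime : ℝ → Fin K)
    (αlow αhigh α1low α1high βhigh : ℝ)
    (hα1low : 0 < α1low) (hβnn : 0 ≤ βhigh) (hβ : βhigh < 1)
    (Θ : Set ((Fin K → ℝ) × (Fin K → ℝ) × (Fin K → ℝ))) (hΘne : Θ.Nonempty)
    (hΘ : ∀ θ ∈ Θ, (∀ k, θ.1 k ∈ Set.Icc αlow αhigh) ∧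
      (∀ k, θ.2.1 k ∈ Set.Icc α1low α1high) ∧ (∀ k, θ.2.2 k ∈ Set.Icc 0 βhigh))
    (f0 d0 : ℝ) (hd0 : 1 ≤ d0)
    -- the forecast recursions, started at the same initial value `f0`
    (f : ((Fin K → ℝ) × (Fin K → ℝ) × (Fin K → ℝ)) → ℕ → ℝ)
    (hfinit : ∀ θ, f θ 0 = f0)
    (hfrec : ∀ θ t, f θ (t + 1) =
      θ.1 (regime (Y t)) + θ.2.1 (regime (Y t)) * Y t + θ.2.2 (regime (Y t)) * f θ t)
    -- the dominating process for `θ̇`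
    (θ θdot : (Fin K → ℝ) × (Fin K → ℝ) × (Fin K → ℝ))
    (hθ : θ ∈ Θ) (hθdot : θdot ∈ Θ)
    (d : ℕ → ℝ) (hdinit : d 0 = d0)
    (hdrec : ∀ t, d (t + 1) = 1 + |Y t| + |f θdot t| + βhigh * d t)
    (δ : ℝ) (hδ0 : 0 < δ) (hδ1 : δ ≤ 1)
    (hdist : Real.sqrt (∑ k, (θ.1 k - θdot.1 k) ^ 2 + ∑ k, (θ.2.1 k - θdot.2.1 k) ^ 2 +
      ∑ k, (θ.2.2 k - θdot.2.2 k) ^ 2) ≤ δ) :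
    ∀ t : ℕ, |f θ t - f θdot t| ≤ δ * d t := by

  -- coordinatewise bounds from the Euclidean distance bound
  have hS0 : ∀ (g : Fin K → ℝ), 0 ≤ ∑ k, g k ^ 2 :=
    fun g => Finset.sum_nonneg fun k _ => sq_nonneg _
  set S := ∑ k, (θ.1 k - θdot.1 k) ^ 2 + ∑ k, (θ.2.1 k - θdot.2.1 k) ^ 2 +
      ∑ k, (θ.2.2 k - θdot.2.2 k) ^ 2 with hSdef
  have coord : ∀ (x : ℝ), x ^ 2 ≤ S → |x| ≤ δ := by
    intro x hx
    have : |x| = Real.sqrt (x ^ 2) := (Real.sqrt_sq_eq_abs x).symm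
    rw [this]
    exact le_trans (Real.sqrt_le_sqrt hx) hdist
  have single : ∀ (g : Fin K → ℝ) (k : Fin K), g k ^ 2 ≤ ∑ j, g j ^ 2 := fun g k =>
    Finset.single_le_sum (fun j _ => sq_nonneg (g j)) (Finset.mem_univ k)
  have h1 : ∀ k, |θ.1 k - θdot.1 k| ≤ δ := fun k => coord _ <| by
    have := single (fun j => θ.1 j - θdot.1 j) k
    simp only [hSdef]; linarith [hS0 (fun j => θ.2.1 j - θdot.2.1 j),
      hS0 (fun j => θ.2.2 j - θdot.2.2 j)]
  have h2 : ∀ k, |θ.2.1 k - θdot.2.1 k| ≤ δ := fun k => coord _ <| by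
    have := single (fun j => θ.2.1 j - θdot.2.1 j) k
    simp only [hSdef]; linarith [hS0 (fun j => θ.1 j - θdot.1 j),
      hS0 (fun j => θ.2.2 j - θdot.2.2 j)]
  have h3 : ∀ k, |θ.2.2 k - θdot.2.2 k| ≤ δ := fun k => coord _ <| by
    have := single (fun j => θ.2.2 j - θdot.2.2 j) k
    simp only [hSdef]; linarith [hS0 (fun j => θ.1 j - θdot.1 j),
      hS0 (fun j => θ.2.1 j - θdot.2.1 j)]
  -- dominating process is positive
  have hdpos : ∀ t, 1 ≤ d t := by
    intro t
    induction t with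
    | zero => rw [hdinit]; exact hd0
    | succ t ih =>
      rw [hdrec t]
      have := abs_nonneg (Y t); have := abs_nonneg (f θdot t)
      nlinarith
  intro t
  induction t with
  | zero =>
    rw [hfinit, hfinit, sub_self, abs_zero, hdinit]
    nlinarith
  | succ t ih =>
    rw [hfrec, hfrec, hdrec]
    set k := regime (Y t)
    have hβk : θ.2.2 k ∈ Set.Icc (0:ℝ) βhigh := (hΘ θ hθ).2.2 k
    have key : θ.1 k + θ.2.1 k * Y t + θ.2.2 k * f θ t -
        (θdot.1 k + θdot.2.1 k * Y t + θdot.2.2 k * f θdot t)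
        = (θ.1 k - θdot.1 k) + (θ.2.1 k - θdot.2.1 k) * Y t
          + (θ.2.2 k - θdot.2.2 k) * f θdot t + θ.2.2 k * (f θ t - f θdot t) := by ring
    rw [key]
    calc _ ≤ |(θ.1 k - θdot.1 k) + (θ.2.1 k - θdot.2.1 k) * Y t
          + (θ.2.2 k - θdot.2.2 k) * f θdot t| + |θ.2.2 k * (f θ t - f θdot t)| :=
            abs_add_le _ _
      _ ≤ (|θ.1 k - θdot.1 k| + |(θ.2.1 k - θdot.2.1 k) * Y t|
          + |(θ.2.2 k - θdot.2.2 k) * f θdot t|) + |θ.2.2 k| * |f θ t - f θdot t| := by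
            rw [abs_mul]
            exact add_le_add (abs_add_three _ _ _) le_rfl
      _ ≤ (δ + δ * |Y t| + δ * |f θdot t|) + βhigh * (δ * d t) := by
            rw [abs_mul, abs_mul]
            refine add_le_add (add_le_add (add_le_add (h1 k) ?_) ?_) ?_
            · exact mul_le_mul_of_nonneg_right (h2 k) (abs_nonneg _)
            · exact mul_le_mul_of_nonneg_right (h3 k) (abs_nonneg _)
            · have h0k : |θ.2.2 k| = θ.2.2 k := abs_of_nonneg hβk.1
              rw [h0k]
              exact mul_le_mul hβk.2 ih (abs_nonneg _) hβnn
      _ = δ * (1 + |Y t| + |f θdot t| + βhigh * d t) := by ring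
end

section
/- Let ψ be strictly convex and continuously differentiable on a convex set S ⊆ ℝ and let L(u, v) = ψ(u) − ψ(v) − ψ′(v)(u − v) be the associated Bregman loss. Let y, v, w ∈ S with v, w in the interior of S, let δ ∈ (0, 1] and d ≥ 1 be such that |w − v| ≤ δ d, and suppose L(v, w) ≤ C_ψ (v − w)² and L(w, v) ≤ C_ψ (v − w)² for some C_ψ > 0. Then L(y, w) ≤ L(y, v) + δ C_ψ ( d² + 2|y − v| d ). -/
/-- **The domination inequality for Bregman losses.** If `ψ` is strictly convex and
continuously differentiable on a convex `S ⊆ ℝ` with Bregman loss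
`L(u,v) = ψ(u) - ψ(v) - ψ'(v)(u - v)`, and `y ∈ S`, `v, w ∈ int S` with `|w - v| ≤ δ d`
for `δ ∈ (0,1]`, `d ≥ 1`, and `L(v,w) ≤ C_ψ (v-w)²`, `L(w,v) ≤ C_ψ (v-w)²`, then
`L(y,w) ≤ L(y,v) + δ C_ψ (d² + 2 |y - v| d)`. -/
theorem bregman_domination (S : Set ℝ) (hS : Convex ℝ S) (ψ ψ' : ℝ → ℝ)
    (hconv : StrictConvexOn ℝ S ψ)
    (hderiv : ∀ x ∈ S, HasDerivAt ψ (ψ' x) x)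
    (hcont : ContinuousOn ψ' S)
    (L : ℝ → ℝ → ℝ) (hL : ∀ u v, L u v = ψ u - ψ v - ψ' v * (u - v))
    (y v w : ℝ) (hy : y ∈ S) (hv : v ∈ interior S) (hw : w ∈ interior S)
    (δ : ℝ) (hδ : δ ∈ Set.Ioc (0 : ℝ) 1) (d : ℝ) (hd : 1 ≤ d)
    (hvw : |w - v| ≤ δ * d)
    (Cψ : ℝ) (hCψ : 0 < Cψ)
    (h1 : L v w ≤ Cψ * (v - w) ^ 2) (h2 : L w v ≤ Cψ * (v - w) ^ 2) :
    L y w ≤ L y v + δ * Cψ * (d ^ 2 + 2 * |y - v| * d) := by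
  obtain ⟨hδ0, hδ1⟩ := hδ
  have hSv : v ∈ S := interior_subset hv
  have hSw : w ∈ S := interior_subset hw
  have hd0 : (0:ℝ) < d := lt_of_lt_of_le one_pos hd
  -- monotonicity of ψ' on S
  have hmono : ∀ a ∈ S, ∀ b ∈ S, a < b → ψ' a ≤ ψ' b := by
    intro a ha b hb hab
    have h1' := hconv.convexOn.le_slope_of_hasDerivAt ha hb hab (hderiv a ha)
    have h2' := hconv.convexOn.slope_le_of_hasDerivAt ha hb hab (hderiv b hb)
    exact h1'.trans h2'
  have hsign : 0 ≤ (v - w) * (ψ' v - ψ' w) := by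
    rcases lt_trichotomy v w with h | h | h
    · have := hmono v hSv w hSw h
      nlinarith
    · simp [h]
    · have := hmono w hSw v hSv h
      nlinarith
  -- key identity consequence
  have hkey : (v - w) * (ψ' v - ψ' w) ≤ 2 * Cψ * (v - w) ^ 2 := by
    rw [hL] at h1 h2
    nlinarith
  have habs : |ψ' v - ψ' w| * |v - w| ≤ 2 * Cψ * (v - w) ^ 2 := by
    calc |ψ' v - ψ' w| * |v - w| = |(v - w) * (ψ' v - ψ' w)| := by
          rw [abs_mul]; ring
      _ = (v - w) * (ψ' v - ψ' w) := abs_of_nonneg hsign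
      _ ≤ 2 * Cψ * (v - w) ^ 2 := hkey
  have hvw' : |v - w| ≤ δ * d := by rwa [abs_sub_comm]
  have hder_bound : |ψ' v - ψ' w| ≤ 2 * Cψ * (δ * d) := by
    rcases eq_or_ne v w with h | h
    · simp [h]
      positivity
    · have hpos : 0 < |v - w| := abs_pos.mpr (sub_ne_zero.mpr h)
      have : |ψ' v - ψ' w| * |v - w| ≤ 2 * Cψ * (δ * d) * |v - w| := by
        have h2' : 2 * Cψ * (v - w) ^ 2 = 2 * Cψ * |v - w| * |v - w| := by
          rw [sq, ← abs_mul_abs_self (v - w)]; ring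
        have := mul_le_mul_of_nonneg_left hvw' (by positivity : (0:ℝ) ≤ 2 * Cψ * |v - w|)
        nlinarith
      exact le_of_mul_le_mul_right this hpos
  -- first term bound
  have hLvw : L v w ≤ δ * Cψ * d ^ 2 := by
    have hsq : (v - w) ^ 2 ≤ (δ * d) ^ 2 := by
      rw [← sq_abs (v - w)]
      exact pow_le_pow_left₀ (abs_nonneg _) hvw' 2
    have : Cψ * (v - w) ^ 2 ≤ Cψ * (δ * d) ^ 2 := by nlinarith
    nlinarith [sq_nonneg d, mul_pos hδ0 hd0]
  -- second term bound
  have hterm : (ψ' v - ψ' w) * (y - v) ≤ 2 * Cψ * (δ * d) * |y - v| := by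
    calc (ψ' v - ψ' w) * (y - v) ≤ |(ψ' v - ψ' w) * (y - v)| := le_abs_self _
      _ = |ψ' v - ψ' w| * |y - v| := abs_mul _ _
      _ ≤ 2 * Cψ * (δ * d) * |y - v| :=
          mul_le_mul_of_nonneg_right hder_bound (abs_nonneg _)
  -- the Bregman three-point identity
  have hid : L y w = L y v + L v w + (ψ' v - ψ' w) * (y - v) := by
    simp only [hL]; ring
  rw [hid]
  nlinarith [abs_nonneg (y - v)]
end

section
/- Let ψ be strictly convex and continuously differentiable on a convex set S ⊆ ℝ, with Bregman loss L(u, v) = ψ(u) − ψ(v) − ψ′(v)(u − v). Let f̄, y, g ∈ S, let (w₁, w₂, w₃) belong to the 3-dimensional simplex, and suppose μ = w₁ f̄ + w₂ y + w₃ g lies in the interior of S. Then for every f in the interior of S, Q(f) := w₁ L(f̄, f) + w₂ L(y, f) + w₃ L(g, f) satisfies Q(f) = Q(μ) + L(μ, f); consequently Q(f) ≥ Q(μ) with equality if and only if f = μ, so μ is the unique minimizer of Q over the interior of S. -/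
lemma bregman_pos {S : Set ℝ} {ψ ψ' : ℝ → ℝ}
    (hconv : StrictConvexOn ℝ S ψ)
    (hderiv : ∀ x ∈ S, HasDerivAt ψ (ψ' x) x)
    {u v : ℝ} (hu : u ∈ S) (hv : v ∈ S) (huv : u ≠ v) :
    0 < ψ u - ψ v - ψ' v * (u - v) := by
  rcases lt_or_gt_of_ne huv with h | h
  · -- u < v : slope ψ u v < ψ' v
    have hs := hconv.slope_lt_of_hasDerivAt hu hv h (hderiv v hv)
    rw [slope_def_field, div_lt_iff₀ (by linarith)] at hs
    nlinarith
  · -- v < u : ψ' v < slope ψ v u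
    have hs := hconv.lt_slope_of_hasDerivAt hv hu h (hderiv v hv)
    rw [slope_def_field, lt_div_iff₀ (by linarith)] at hs
    nlinarith

/-- **Recursive prediction as the solution of a sequential optimization problem.** For a
strictly convex, continuously differentiable `ψ` on a convex `S ⊆ ℝ` with Bregman loss
`L`, weights `(w₁,w₂,w₃)` in the 3-simplex, points `f̄, y, g ∈ S` and
`μ = w₁ f̄ + w₂ y + w₃ g` in the interior of `S`, the tracking error
`Q(f) = w₁ L(f̄,f) + w₂ L(y,f) + w₃ L(g,f)` satisfies `Q(f) = Q(μ) + L(μ,f)` for all `f`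
in the interior of `S`; hence `Q(f) ≥ Q(μ)` with equality iff `f = μ`, so `μ` is the
unique minimizer of `Q` over the interior of `S`. -/
theorem tracking_error_minimizer (S : Set ℝ) (hS : Convex ℝ S) (ψ ψ' : ℝ → ℝ)
    (hconv : StrictConvexOn ℝ S ψ)
    (hderiv : ∀ x ∈ S, HasDerivAt ψ (ψ' x) x)
    (hcont : ContinuousOn ψ' S)
    (L : ℝ → ℝ → ℝ) (hL : ∀ u v, L u v = ψ u - ψ v - ψ' v * (u - v))
    (fbar y g : ℝ) (hfbar : fbar ∈ S) (hy : y ∈ S) (hg : g ∈ S)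
    (w₁ w₂ w₃ : ℝ) (hw₁ : 0 ≤ w₁) (hw₂ : 0 ≤ w₂) (hw₃ : 0 ≤ w₃)
    (hsum : w₁ + w₂ + w₃ = 1)
    (μ : ℝ) (hμ : μ = w₁ * fbar + w₂ * y + w₃ * g) (hμint : μ ∈ interior S)
    (Q : ℝ → ℝ) (hQ : ∀ f, Q f = w₁ * L fbar f + w₂ * L y f + w₃ * L g f) :
    (∀ f ∈ interior S, Q f = Q μ + L μ f) ∧
    (∀ f ∈ interior S, Q μ ≤ Q f) ∧
    (∀ f ∈ interior S, Q f = Q μ ↔ f = μ) := by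
  have hμS : μ ∈ S := interior_subset hμint
  have key : ∀ f : ℝ, Q f = Q μ + L μ f := by
    intro f
    have h3 : w₃ = 1 - w₁ - w₂ := by linarith
    simp only [hQ, hL, hμ, h3]
    ring
  have hLnn : ∀ f ∈ interior S, 0 ≤ L μ f := by
    intro f hf
    rcases eq_or_ne μ f with h | h
    · simp [hL, h]
    · exact le_of_lt (by rw [hL]; exact bregman_pos hconv hderiv hμS (interior_subset hf) h)
  refine ⟨fun f _ => key f, fun f hf => by rw [key f]; linarith [hLnn f hf], fun f hf => ?_⟩
  constructor
  · intro hQf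
    by_contra hne
    have hpos := bregman_pos hconv hderiv hμS (interior_subset hf) (Ne.symm hne)
    rw [key f] at hQf
    rw [hL] at hQf
    linarith
  · intro h
    rw [h, key μ, hL]
end

section
/- Let ψ be strictly convex and continuously differentiable on a convex set S ⊆ ℝ with Bregman loss L(u, v) = ψ(u) − ψ(v) − ψ′(v)(u − v), let (w₁, w₂, w₃) be in the 3-dimensional simplex with w₂, w₃ > 0, let {Y_t} ⊂ S, and define f₀ = f̄ ∈ S and f_t = w₁ f̄ + w₂ Y_{t−1} + w₃ f_{t−1} for t ≥ 1 (assumed to remain in S). Then for each t ≥ 1 there exists a constant c_t, not depending on f, such that for all f in the interior of S: w₁ L(f̄, f) + w₂ L(Y_{t−1}, f) + w₃ L(f_{t−1}, f) = w₂ [ Σ_{i=0}^{t−1} w₃^i L(Y_{t−1−i}, f) + λ_t L(f̄, f) ] + c_t, where λ_t = w₂^{−1} − Σ_{i=1}^t w₃^{i−1}. In particular, the tracking error function Q_t(f) = w₁ L(f̄, f) + w₂ L(Y_{t−1}, f) + w₃ L(f_{t−1}, f) is, up to a positive scalar multiple and an additive constant, equal to the exponentially kernel-weighted objective Σ_{i=0}^{t−1}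 k((x_t − x_{t−i})/h) L(Y_{t−i−1}, f) + λ_t L(f̄, f), with x_t = t, k(u) = e^u 1{u ≤ 0}, and h = 1/ln(w₃). -/
/-- **The tracking error as an exponentially kernel-weighted objective.** For a strictly
convex, continuously differentiable `ψ` on a convex `S ⊆ ℝ` with Bregman loss `L`, weights
`(w₁,w₂,w₃)` in the 3-simplex with `w₂, w₃ > 0`, and the recursion
`f₀ = f̄`, `f_t = w₁ f̄ + w₂ Y_{t-1} + w₃ f_{t-1}`, for each `t ≥ 1` there is a constant
`c_t` (not depending on `f`) such that for all `f` in the interior of `S`,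
`w₁ L(f̄,f) + w₂ L(Y_{t-1},f) + w₃ L(f_{t-1},f)
  = w₂ [Σ_{i=0}^{t-1} w₃^i L(Y_{t-1-i},f) + λ_t L(f̄,f)] + c_t`,
with `λ_t = w₂⁻¹ - Σ_{i=1}^t w₃^{i-1}`; moreover `w₃^i = k((x_t - x_{t-i})/h)` with
`x_t = t`, `k(u) = e^u 1{u ≤ 0}` and `h = 1/ln w₃`. -/
theorem tracking_error_kernel_representation (S : Set ℝ) (hS : Convex ℝ S)
    (ψ ψ' : ℝ → ℝ)
    (hconv : StrictConvexOn ℝ S ψ)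
    (hderiv : ∀ x ∈ S, HasDerivAt ψ (ψ' x) x)
    (L : ℝ → ℝ → ℝ) (hL : ∀ u v, L u v = ψ u - ψ v - ψ' v * (u - v))
    (w₁ w₂ w₃ : ℝ) (hw₁ : 0 ≤ w₁) (hw₂ : 0 < w₂) (hw₃ : 0 < w₃)
    (hsum : w₁ + w₂ + w₃ = 1)
    (Y : ℕ → ℝ) (hY : ∀ t, Y t ∈ S)
    (fbar : ℝ) (hfbar : fbar ∈ S)
    (fseq : ℕ → ℝ) (hfinit : fseq 0 = fbar)
    (hfrec : ∀ t, fseq (t + 1) = w₁ * fbar + w₂ * Y t + w₃ * fseq t)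
    (hfS : ∀ t, fseq t ∈ S)
    (k : ℝ → ℝ) (hk : ∀ u, k u = if u ≤ 0 then Real.exp u else 0)
    (h : ℝ) (hh : h = 1 / Real.log w₃) :
    ∀ t : ℕ, 1 ≤ t → ∃ c : ℝ, ∀ f ∈ interior S,
      (w₁ * L fbar f + w₂ * L (Y (t - 1)) f + w₃ * L (fseq (t - 1)) f =
        w₂ * ((∑ i ∈ Finset.range t, w₃ ^ i * L (Y (t - 1 - i)) f) +
          (w₂⁻¹ - ∑ i ∈ Finset.range t, w₃ ^ i) * L fbar f) + c) ∧
      (w₁ * L fbar f + w₂ * L (Y (t - 1)) f + w₃ * L (fseq (t - 1)) f =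
        w₂ * ((∑ i ∈ Finset.range t, k (((t : ℝ) - ((t : ℝ) - (i : ℝ))) / h) *
            L (Y (t - 1 - i)) f) +
          (w₂⁻¹ - ∑ i ∈ Finset.range t, w₃ ^ i) * L fbar f) + c) := by
  have hw₃1 : w₃ < 1 := by linarith
  have hlog : Real.log w₃ < 0 := Real.log_neg hw₃ hw₃1
  have key : ∀ n : ℕ, w₁ * fbar + w₂ * Y n + w₃ * fseq n =
      w₂ * (∑ i ∈ Finset.range (n + 1), w₃ ^ i * Y (n - i)) +
      (1 - w₂ * ∑ i ∈ Finset.range (n + 1), w₃ ^ i) * fbar := by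
    intro n
    induction n with
    | zero =>
        simp only [zero_add, Finset.sum_range_one, pow_zero, one_mul,
          Nat.sub_zero, hfinit]
        linear_combination fbar * hsum
    | succ m ih =>
        have e1 : (∑ i ∈ Finset.range (m+1), w₃ ^ i * w₃ * Y (m - i)) =
            w₃ * ∑ i ∈ Finset.range (m+1), w₃ ^ i * Y (m - i) := by
          rw [Finset.mul_sum]; exact Finset.sum_congr rfl fun i _ => by ring
        have e2 : (∑ i ∈ Finset.range (m+1), w₃ ^ i * w₃) =
            w₃ * ∑ i ∈ Finset.range (m+1), w₃ ^ i := by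
          rw [Finset.mul_sum]; exact Finset.sum_congr rfl fun i _ => by ring
        rw [hfrec m, Finset.sum_range_succ' (fun i => w₃ ^ i * Y (m + 1 - i)),
            Finset.sum_range_succ' (fun i => w₃ ^ i)]
        simp only [pow_succ, pow_zero, one_mul, Nat.add_sub_cancel,
          Nat.succ_sub_succ_eq_sub, Nat.sub_zero]
        rw [e1, e2]
        linear_combination w₃ * ih + fbar * hsum
  intro t ht
  obtain ⟨n, rfl⟩ : ∃ n, t = n + 1 := ⟨t - 1, (Nat.succ_pred_eq_of_pos ht).symm⟩
  simp only [Nat.add_sub_cancel]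
  refine ⟨w₁ * ψ fbar + w₂ * ψ (Y n) + w₃ * ψ (fseq n)
      - w₂ * ((∑ i ∈ Finset.range (n + 1), w₃ ^ i * ψ (Y (n - i))) +
        (w₂⁻¹ - ∑ i ∈ Finset.range (n + 1), w₃ ^ i) * ψ fbar), fun f _ => ?_⟩
  have hinv : w₂ * w₂⁻¹ = 1 := mul_inv_cancel₀ hw₂.ne'
  have expand : ∑ i ∈ Finset.range (n + 1), w₃ ^ i * L (Y (n - i)) f =
      (∑ i ∈ Finset.range (n + 1), w₃ ^ i * ψ (Y (n - i)))
      - (∑ i ∈ Finset.range (n + 1), w₃ ^ i) * ψ f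
      - ψ' f * ((∑ i ∈ Finset.range (n + 1), w₃ ^ i * Y (n - i))
          - (∑ i ∈ Finset.range (n + 1), w₃ ^ i) * f) := by
    have e : ∀ i, w₃ ^ i * L (Y (n - i)) f =
        w₃ ^ i * ψ (Y (n - i)) - w₃ ^ i * ψ f
          - (ψ' f * (w₃ ^ i * Y (n - i)) - ψ' f * (w₃ ^ i * f)) := fun i => by
      rw [hL]; ring
    simp only [e, Finset.sum_sub_distrib, ← Finset.sum_mul, ← Finset.mul_sum]
    ring
  have keyn := key n
  have eq1 : w₁ * L fbar f + w₂ * L (Y n) f + w₃ * L (fseq n) f =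
      w₂ * ((∑ i ∈ Finset.range (n + 1), w₃ ^ i * L (Y (n - i)) f) +
        (w₂⁻¹ - ∑ i ∈ Finset.range (n + 1), w₃ ^ i) * L fbar f) +
      (w₁ * ψ fbar + w₂ * ψ (Y n) + w₃ * ψ (fseq n)
        - w₂ * ((∑ i ∈ Finset.range (n + 1), w₃ ^ i * ψ (Y (n - i))) +
          (w₂⁻¹ - ∑ i ∈ Finset.range (n + 1), w₃ ^ i) * ψ fbar)) := by
    rw [expand]
    simp only [hL]
    linear_combination (-(ψ' f)) * keyn +
      (ψ f + ψ' f * fbar - ψ' f * f) * hinv + (ψ' f * f - ψ f) * hsum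
  refine ⟨eq1, ?_⟩
  have hks : ∀ i ∈ Finset.range (n + 1),
      k (((((n + 1 : ℕ) : ℝ)) - ((((n + 1 : ℕ) : ℝ)) - (i : ℝ))) / h) *
        L (Y (n - i)) f = w₃ ^ i * L (Y (n - i)) f := by
    intro i _
    congr 1
    have harg : (((((n + 1 : ℕ) : ℝ)) - ((((n + 1 : ℕ) : ℝ)) - (i : ℝ))) / h) =
        (i : ℝ) * Real.log w₃ := by
      have hlogne : Real.log w₃ ≠ 0 := hlog.ne
      rw [hh]
      field_simp
      ring
    rw [harg, hk,
      if_pos (mul_nonpos_iff.mpr (Or.inl ⟨Nat.cast_nonneg i, hlog.le⟩)),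
      Real.exp_nat_mul, Real.exp_log hw₃]
  rw [Finset.sum_congr rfl hks]
  exact eq1
end
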